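/- For every r ≥ 1 and every permutation π of {0,…,2^r − 1}, there exists a setting of the switches of an r-Benes network that realises π; equivalently, every permutation of [2^r] factors as τ_in ∘ (σ_0 ⊕ σ_1) ∘ τ_out, where τ_in, τ_out are permutations obtained from 2^{r−1} independent binary switches (each switch i either fixes or swaps inputs i and i + 2^{r−1}), and σ_0, σ_1 are arbitrary permutations of [2^{r−1}] acting on the first and second halves respectively. -/

import Mathlib

/-- The outer layer of switches of a Benes network: input `x` is paired with
`x + N` (resp. `x - N`), and the switch `s` either fixes or swaps each pair. -/
def switchLayer (N : ℕ) (s : Fin N → Bool) : Fin (2 * N) → Fin (2 * N) := fun x =>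
  if h : x.val < N then
    if s ⟨x.val, h⟩ then ⟨x.val + N, by omega⟩ else x
  else
    if s ⟨x.val - N, by have := x.isLt; omega⟩ then
      ⟨x.val - N, by have := x.isLt; omega⟩ else x

/-- The middle layer `σ₀ ⊕ σ₁`: `σ₀` permutes the first half `{0,…,N-1}` and
`σ₁` permutes the second half `{N,…,2N-1}`. -/
def middleLayer (N : ℕ) (σ₀ σ₁ : Equiv.Perm (Fin N)) : Fin (2 * N) → Fin (2 * N) := fun x =>
  if h : x.val < N then ⟨(σ₀ ⟨x.val, h⟩).val, by have := (σ₀ ⟨x.val, h⟩).isLt; omega⟩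
  else ⟨(σ₁ ⟨x.val - N, by have := x.isLt; omega⟩).val + N,
    by have := (σ₁ ⟨x.val - N, by have := x.isLt; omega⟩).isLt; omega⟩

/-- The partner of `x` in the switch pairing. -/
def benesPartner (N : ℕ) (x : Fin (2 * N)) : Fin (2 * N) :=
  if h : x.val < N then ⟨x.val + N, by omega⟩
  else ⟨x.val - N, by have := x.isLt; omega⟩

/-- The switch index of `x`. -/
def benesIdx (N : ℕ) (x : Fin (2 * N)) : Fin N :=
  if h : x.val < N then ⟨x.val, h⟩ else ⟨x.val - N, by have := x.isLt; omega⟩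

theorem switchLayer_eq (N : ℕ) (s : Fin N → Bool) (x : Fin (2 * N)) :
    switchLayer N s x = if s (benesIdx N x) then benesPartner N x else x := by
  by_cases h : x.val < N
  · simp only [switchLayer, benesIdx, benesPartner, dif_pos h]
  · simp only [switchLayer, benesIdx, benesPartner, dif_neg h]

theorem benesPartner_invol (N : ℕ) (x : Fin (2 * N)) :
    benesPartner N (benesPartner N x) = x := by
  have := x.isLt
  unfold benesPartner
  by_cases h : x.val < N
  · rw [dif_pos h, dif_neg (by simp <;> omega)]
    apply Fin.ext; simp <;> omega
  · rw [dif_neg h, dif_pos (by simp <;> omega)]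
    apply Fin.ext; simp <;> omega

theorem benesPartner_val_lt (N : ℕ) (x : Fin (2 * N)) :
    (benesPartner N x).val < N ↔ ¬ x.val < N := by
  have := x.isLt
  unfold benesPartner
  by_cases h : x.val < N
  · rw [dif_pos h]; simp; omega
  · rw [dif_neg h]; simp; omega

theorem benesPartner_ne (N : ℕ) (hN1 : 1 ≤ N) (x : Fin (2 * N)) :
    benesPartner N x ≠ x := by
  have := x.isLt
  intro hc
  have := congrArg Fin.val hc
  unfold benesPartner at this
  by_cases h : x.val < N
  · rw [dif_pos h] at this; simp at this; omega
  · rw [dif_neg h] at this; simp at this; omega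

theorem benesIdx_partner (N : ℕ) (x : Fin (2 * N)) :
    benesIdx N (benesPartner N x) = benesIdx N x := by
  have := x.isLt
  unfold benesIdx benesPartner
  by_cases h : x.val < N
  · rw [dif_pos h, dif_pos h, dif_neg (by simp <;> omega)]
    apply Fin.ext; simp <;> omega
  · rw [dif_neg h, dif_neg h, dif_pos (by simp <;> omega)]
    try (apply Fin.ext; simp <;> omega)

theorem switchLayer_involutive (N : ℕ) (s : Fin N → Bool) :
    Function.Involutive (switchLayer N s) := by
  intro x
  rw [switchLayer_eq, switchLayer_eq]
  by_cases hs : s (benesIdx N x)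
  · rw [if_pos hs, benesIdx_partner, if_pos hs, benesPartner_invol]
  · rw [if_neg hs, if_neg hs]

/-- The value of `x`'s embedding of its switch index. -/
theorem benesIdx_emb (N : ℕ) (x : Fin (2 * N)) (hv : (benesIdx N x).val < 2 * N) :
    (⟨(benesIdx N x).val, hv⟩ : Fin (2 * N)) = if x.val < N then x else benesPartner N x := by
  have := x.isLt
  by_cases h : x.val < N
  · rw [if_pos h]; apply Fin.ext; simp [benesIdx, h]
  · rw [if_neg h]; apply Fin.ext; simp [benesIdx, benesPartner, h]

theorem exists_invol_coloring {α : Type*} {f : α → α} (hinv : Function.Involutive f)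
    (hfpf : ∀ x, f x ≠ x) : ∃ c : α → Bool, ∀ x, c (f x) = !c x := by
  classical
  let s : Setoid α := ⟨fun x y => x = y ∨ x = f y,
    ⟨fun x => Or.inl rfl,
     fun {x y} h => h.elim (fun h => Or.inl h.symm) (fun h => Or.inr (by rw [h, hinv])),
     fun {x y z} h1 h2 => by
      rcases h1 with h1 | h1 <;> rcases h2 with h2 | h2
      · exact Or.inl (h1.trans h2)
      · exact Or.inr (h1.trans h2)
      · exact Or.inr (h2 ▸ h1)
      · exact Or.inl (by rw [h1, h2, hinv])⟩⟩
  refine ⟨fun x => decide ((Quotient.mk s x).out = x), fun x => ?_⟩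
  have hq : (Quotient.mk s (f x)) = Quotient.mk s x := Quotient.sound (Or.inr rfl)
  have hout : s.r (Quotient.mk s x).out x := Quotient.mk_out x
  simp only []
  rw [hq]
  rcases hout with h | h
  · have h1 : (Quotient.mk s x).out ≠ f x := fun hc => hfpf x (hc.symm.trans h)
    simp [h, h1]
    exact fun hc => hfpf x hc.symm
  · have h1 : (Quotient.mk s x).out ≠ x := fun hc => hfpf x (h.symm.trans hc)
    simp [h, h1, hfpf x]

theorem exists_two_invol_coloring {α : Type*} (a b : Equiv.Perm α)
    (hai : ∀ x, a (a x) = x) (haf : ∀ x, a x ≠ x)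
    (hbi : ∀ x, b (b x) = x) (hbf : ∀ x, b x ≠ x) :
    ∃ c : α → Bool, (∀ x, c (a x) = !c x) ∧ (∀ x, c (b x) = !c x) := by
  classical
  set g : Equiv.Perm α := b * a with hg
  have ha2 : a * a = 1 := Equiv.ext fun x => hai x
  have hb2 : b * b = 1 := Equiv.ext fun x => hbi x
  have hainv : a⁻¹ = a := (eq_inv_of_mul_eq_one_left ha2).symm
  have hbinv : b⁻¹ = b := (eq_inv_of_mul_eq_one_left hb2).symm
  have h1 : a * g * a⁻¹ = g⁻¹ := by
    rw [hg, mul_inv_rev, hainv, hbinv, ← mul_assoc, mul_assoc (a * b), ha2, mul_one]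
  have hconj : ∀ k : ℤ, a * g ^ k * a⁻¹ = g ^ (-k) := fun k => by
    have := map_zpow (MulAut.conj a) g k
    simp only [MulAut.conj_apply] at this
    rw [this, h1, ← zpow_neg_one, ← zpow_mul]
    ring_nf
  have hstep : ∀ (k : ℤ) (x : α), a ((g ^ k) x) = (g ^ (-k)) (a x) := by
    intro k x
    have h2 : a * g ^ k = g ^ (-k) * a := by
      rw [← hconj k, mul_assoc, hainv, ha2, mul_one]
    calc a ((g ^ k) x) = (a * g ^ k) x := rfl
      _ = (g ^ (-k) * a) x := by rw [h2]
      _ = (g ^ (-k)) (a x) := rfl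
  let s : Setoid α := ⟨g.SameCycle, ⟨fun x => Equiv.Perm.SameCycle.refl g x,
    Equiv.Perm.SameCycle.symm, Equiv.Perm.SameCycle.trans⟩⟩
  let abar : Quotient s → Quotient s := Quotient.map a (by
    rintro x y ⟨k, hk⟩
    exact ⟨-k, by rw [← hstep, hk]⟩)
  have habar_mk : ∀ x : α, abar (Quotient.mk s x) = Quotient.mk s (a x) := fun x => rfl
  have habar_inv : Function.Involutive abar := by
    intro q
    induction q using Quotient.inductionOn with
    | h x => rw [habar_mk, habar_mk, hai]
  have habar_fpf : ∀ q, abar q ≠ q := by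
    intro q hq
    induction q using Quotient.inductionOn with
    | h x =>
      rw [habar_mk] at hq
      obtain ⟨k, hk⟩ : g.SameCycle (a x) x := Quotient.exact hq
      rcases Int.even_or_odd k with ⟨m, hm⟩ | ⟨m, hm⟩
      · apply haf ((g ^ m) (a x))
        rw [hstep, hai]
        have h4 := congrArg (⇑(g ^ (-m))) hk
        rw [← Equiv.Perm.mul_apply, ← zpow_add, hm] at h4
        have h5 : -m + (m + m) = m := by ring
        rw [h5] at h4
        exact h4.symm
      · set y := (g ^ m) (a x) with hy
        apply hbf (a y)
        have h4 := congrArg (⇑(g ^ (-m))) hk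
        rw [← Equiv.Perm.mul_apply, ← zpow_add, hm] at h4
        have h5 : -m + (2 * m + 1) = m + 1 := by ring
        rw [h5] at h4
        have hay : a y = g y := by
          rw [hy, hstep, hai, ← h4]
          rw [← Equiv.Perm.mul_apply g (g ^ m) (a x), ← zpow_one_add]
          have h7 : m + 1 = 1 + m := by ring
          rw [h7]
        have hgy : g y = b (a y) := by rw [hg]; rfl
        exact hgy.symm.trans hay.symm
  obtain ⟨cbar, hcbar⟩ := exists_invol_coloring habar_inv habar_fpf
  refine ⟨fun x => cbar (Quotient.mk s x), fun x => ?_, fun x => ?_⟩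
  · have := hcbar (Quotient.mk s x)
    rw [habar_mk] at this
    exact this
  · have h : (g ^ (1 : ℤ)) (a x) = b x := by
      rw [zpow_one]
      show (b * a) (a x) = b x
      rw [Equiv.Perm.mul_apply, hai]
    have hsc : Quotient.mk s (b x) = Quotient.mk s (a x) :=
      Quotient.sound (Equiv.Perm.SameCycle.symm ⟨1, h⟩)
    show cbar (Quotient.mk s (b x)) = _
    rw [hsc]
    have := hcbar (Quotient.mk s x)
    rw [habar_mk] at this
    exact this

/-- Rearrangeability of the `r`-Benes network: for `r ≥ 1`, every permutation of
`[2^r]` factors as `τ_in ∘ (σ₀ ⊕ σ₁) ∘ τ_out`, where `τ_in, τ_out` come from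
`2^(r-1)` independent binary switches pairing `i` with `i + 2^(r-1)`, and
`σ₀, σ₁` are permutations of `[2^(r-1)]` acting on the two halves. -/
theorem benes_rearrangeable (r : ℕ) (hr : 1 ≤ r) (N : ℕ) (hN : 2 * N = 2 ^ r)
    (π : Equiv.Perm (Fin (2 * N))) :
    ∃ (sIn sOut : Fin N → Bool) (σ₀ σ₁ : Equiv.Perm (Fin N)),
      ∀ x : Fin (2 * N),
        π x = switchLayer N sIn (middleLayer N σ₀ σ₁ (switchLayer N sOut x)) := by
  have hN1 : 1 ≤ N := by
    have h2 : 2 ≤ 2 ^ r := by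
      calc 2 = 2 ^ 1 := (pow_one 2).symm
        _ ≤ 2 ^ r := Nat.pow_le_pow_right (by norm_num) hr
    omega
  set p : Fin (2 * N) → Fin (2 * N) := benesPartner N with hp
  have pinv : Function.Involutive p := benesPartner_invol N
  set pPerm : Equiv.Perm (Fin (2 * N)) := pinv.toPerm with hpPerm
  have hpPc : ∀ x, pPerm x = p x := fun x => rfl
  set bp : Equiv.Perm (Fin (2 * N)) := (π.trans pPerm).trans π.symm with hbp
  have hbpc : ∀ x, bp x = π.symm (p (π x)) := fun x => rfl
  obtain ⟨c, hca, hcb⟩ := exists_two_invol_coloring pPerm bp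
    (fun x => pinv x)
    (fun x => benesPartner_ne N hN1 x)
    (fun x => by
      simp only [hbpc, hpPc, Equiv.apply_symm_apply]
      rw [pinv, Equiv.symm_apply_apply])
    (fun x => by
      simp only [hbpc, hpPc]
      intro hc
      have : p (π x) = π x := by
        have := congrArg π hc
        rwa [Equiv.apply_symm_apply] at this
      exact benesPartner_ne N hN1 (π x) this)
  simp only [hpPc, hbpc] at hca hcb
  have hd : ∀ z, c (π.symm (p z)) = !c (π.symm z) := fun z => by
    have := hcb (π.symm z)
    rwa [Equiv.apply_symm_apply] at this
  set sOut : Fin N → Bool := fun i => c ⟨i.val, by have := i.isLt; omega⟩ with hsOut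
  set sIn : Fin N → Bool := fun i => c (π.symm ⟨i.val, by have := i.isLt; omega⟩) with hsIn
  -- switch values at the index of x
  have hsOutIdx : ∀ x : Fin (2 * N), sOut (benesIdx N x) = if x.val < N then c x else !c x := by
    intro x
    rw [hsOut]
    simp only
    rw [benesIdx_emb N x (by have := (benesIdx N x).isLt; omega)]
    by_cases h : x.val < N
    · rw [if_pos h, if_pos h]
    · rw [if_neg h, if_neg h, hca]
  have hsInIdx : ∀ x : Fin (2 * N),
      sIn (benesIdx N x) = if x.val < N then c (π.symm x) else !c (π.symm x) := by
    intro x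
    rw [hsIn]
    simp only
    rw [benesIdx_emb N x (by have := (benesIdx N x).isLt; omega)]
    by_cases h : x.val < N
    · rw [if_pos h, if_pos h]
    · rw [if_neg h, if_neg h, hd]
  -- half of the output of the out-layer
  have hOutHalf : ∀ x : Fin (2 * N), ((switchLayer N sOut x).val < N) ↔ c x = false := by
    intro x
    rw [switchLayer_eq, hsOutIdx]
    by_cases h : x.val < N
    · rw [if_pos h]
      cases hcx : c x
      · simp [hcx, h]
      · simp [hcx, benesPartner_val_lt, h]
    · rw [if_neg h]
      cases hcx : c x
      · simp [hcx, benesPartner_val_lt, h]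
      · simp [hcx, h]
  have hInHalf : ∀ z : Fin (2 * N),
      ((switchLayer N sIn z).val < N) ↔ c (π.symm z) = false := by
    intro z
    rw [switchLayer_eq, hsInIdx]
    by_cases h : z.val < N
    · rw [if_pos h]
      cases hcz : c (π.symm z)
      · simp [hcz, h]
      · simp [hcz, benesPartner_val_lt, h]
    · rw [if_neg h]
      cases hcz : c (π.symm z)
      · simp [hcz, benesPartner_val_lt, h]
      · simp [hcz, h]
  -- c of the output of the out-layer detects the half of the input
  have hOutC : ∀ y : Fin (2 * N), (c (switchLayer N sOut y) = false) ↔ y.val < N := by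
    intro y
    rw [switchLayer_eq, hsOutIdx]
    by_cases h : y.val < N
    · rw [if_pos h]
      cases hcy : c y
      · simp [hcy, h]
      · have hcay := hca y; rw [hp] at hcay; simp [hcy, hcay, h]
    · rw [if_neg h]
      cases hcy : c y
      · have hcay := hca y; rw [hp] at hcay; simp [hcy, hcay, h]
      · simp [hcy, h]
  set swO : Equiv.Perm (Fin (2 * N)) := (switchLayer_involutive N sOut).toPerm with hswO
  set swI : Equiv.Perm (Fin (2 * N)) := (switchLayer_involutive N sIn).toPerm with hswI
  set F : Equiv.Perm (Fin (2 * N)) := (swO.trans π).trans swI with hFdef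
  have hFapp : ∀ y, F y = switchLayer N sIn (π (switchLayer N sOut y)) := fun y => rfl
  have hF : ∀ y : Fin (2 * N), (F y).val < N ↔ y.val < N := by
    intro y
    rw [hFapp, hInHalf, Equiv.symm_apply_apply]
    exact hOutC y
  have hF' : ∀ y : Fin (2 * N), (F.symm y).val < N ↔ y.val < N := by
    intro y
    conv_rhs => rw [← F.apply_symm_apply y]
    exact (hF _).symm
  set σ₀ : Equiv.Perm (Fin N) :=
    { toFun := fun i => ⟨(F ⟨i.val, by have := i.isLt; omega⟩).val,
        (hF _).mpr i.isLt⟩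
      invFun := fun i => ⟨(F.symm ⟨i.val, by have := i.isLt; omega⟩).val,
        (hF' _).mpr i.isLt⟩
      left_inv := by
        intro i
        apply Fin.ext
        simp [Equiv.symm_apply_apply]
      right_inv := by
        intro i
        apply Fin.ext
        simp [Equiv.apply_symm_apply] } with hσ₀
  set σ₁ : Equiv.Perm (Fin N) :=
    { toFun := fun i => ⟨(F ⟨i.val + N, by have := i.isLt; omega⟩).val - N, by
        have h1 := (F ⟨i.val + N, by have := i.isLt; omega⟩).isLt
        have h2 := (hF ⟨i.val + N, by have := i.isLt; omega⟩)
        simp at h2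
        omega⟩
      invFun := fun i => ⟨(F.symm ⟨i.val + N, by have := i.isLt; omega⟩).val - N, by
        have h1 := (F.symm ⟨i.val + N, by have := i.isLt; omega⟩).isLt
        have h2 := (hF' ⟨i.val + N, by have := i.isLt; omega⟩)
        simp at h2
        omega⟩
      left_inv := by
        intro i
        apply Fin.ext
        simp only
        have h2 := hF ⟨i.val + N, by have := i.isLt; omega⟩
        simp only at h2
        have h3 : ¬ (i.val + N < N) := by omega
        have h4 : ¬ ((F ⟨i.val + N, by have := i.isLt; omega⟩).val < N) := by
          rw [h2]; exact h3
        have h5 : (⟨(F ⟨i.val + N, by have := i.isLt; omega⟩).val - N + N, by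
            have := (F ⟨i.val + N, by have := i.isLt; omega⟩).isLt; omega⟩ : Fin (2 * N))
            = F ⟨i.val + N, by have := i.isLt; omega⟩ := by
          apply Fin.ext; simp <;> omega
        rw [h5, Equiv.symm_apply_apply]
        simp
      right_inv := by
        intro i
        apply Fin.ext
        simp only
        have h2 := hF' ⟨i.val + N, by have := i.isLt; omega⟩
        simp only at h2
        have h3 : ¬ (i.val + N < N) := by omega
        have h4 : ¬ ((F.symm ⟨i.val + N, by have := i.isLt; omega⟩).val < N) := by
          rw [h2]; exact h3
        have h5 : (⟨(F.symm ⟨i.val + N, by have := i.isLt; omega⟩).val - N + N, by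
            have := (F.symm ⟨i.val + N, by have := i.isLt; omega⟩).isLt; omega⟩ : Fin (2 * N))
            = F.symm ⟨i.val + N, by have := i.isLt; omega⟩ := by
          apply Fin.ext; simp <;> omega
        rw [h5, Equiv.apply_symm_apply]
        simp } with hσ₁
  have hM : ∀ z : Fin (2 * N), middleLayer N σ₀ σ₁ z = F z := by
    intro z
    unfold middleLayer
    by_cases h : z.val < N
    · rw [dif_pos h]
      apply Fin.ext
      show (F ⟨z.val, by have := z.isLt; omega⟩).val = (F z).val
      congr 1
    · rw [dif_neg h]
      apply Fin.ext
      show (F ⟨z.val - N + N, by have := z.isLt; omega⟩).val - N + N = (F z).val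
      have h6 : (⟨z.val - N + N, by have := z.isLt; omega⟩ : Fin (2 * N)) = z := by
        apply Fin.ext; simp <;> omega
      rw [h6]
      have h7 := hF z
      have := (F z).isLt
      omega
  refine ⟨sIn, sOut, σ₀, σ₁, fun x => ?_⟩
  rw [hM]
  show π x = switchLayer N sIn (switchLayer N sIn (π (switchLayer N sOut (switchLayer N sOut x))))
  rw [switchLayer_involutive N sIn, switchLayer_involutive N sOut]
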